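/- Let A ∈ ℝ^{(m+1)×(m+1)} be invertible with LU factorization A = L₁₁U₁₁ produced by Gaussian elimination with complete pivoting (no further permutations needed), with pivots p₁,…,p_{m+1}. Then min{|p₁|,…,|p_{m+1}|} ≤ 4^m · σ_{m+1}(A), where σ_{m+1}(A) is the smallest singular value of A. -/

import Mathlib

open Matrix


lemma fin_sum_Iio {n : ℕ} (j : Fin n) (f : ℕ → ℝ) :
    ∑ k ∈ Finset.Iio j, f k.val = ∑ t ∈ Finset.range j.val, f t := by
  apply Finset.sum_nbij' (i := fun (k : Fin n) => (k : ℕ))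
    (j := fun t => if h : t < n then (⟨t, h⟩ : Fin n) else j)
  · intro a ha
    simp only [Finset.mem_Iio, Fin.lt_def] at ha
    simpa using ha
  · intro a ha
    simp only [Finset.mem_range] at ha
    have h : a < n := lt_trans ha j.isLt
    rw [dif_pos h]
    simpa [Finset.mem_Iio, Fin.lt_def] using ha
  · intro a ha
    simp only [Finset.mem_Iio, Fin.lt_def] at ha
    rw [dif_pos a.isLt]
  · intro a ha
    simp only [Finset.mem_range] at ha
    rw [dif_pos (lt_trans ha j.isLt)]
  · intro a ha
    rfl



noncomputable def cB (i k : ℕ) : ℝ := if i = k then 1 else if i < k then 2 ^ (k - i - 1) else 0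

lemma cB_nonneg (i k : ℕ) : 0 ≤ cB i k := by
  unfold cB; split_ifs <;> positivity

lemma rowsum (i : ℕ) : ∀ j : ℕ, i < j →
    ∑ k ∈ Finset.range j, cB i k = 2 ^ (j - i - 1) := by
  intro j
  induction j with
  | zero => omega
  | succ j IH =>
    intro hij
    rw [Finset.sum_range_succ]
    rcases Nat.lt_or_ge i j with h | h
    · rw [IH h]
      have h1 : cB i j = 2 ^ (j - i - 1) := by unfold cB; rw [if_neg (by omega), if_pos h]
      rw [h1]
      have h2 : j + 1 - i - 1 = (j - i - 1) + 1 := by omega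
      rw [h2, pow_succ]
      ring
    · have hij' : i = j := by omega
      subst hij'
      have h1 : cB i i = 1 := by unfold cB; rw [if_pos rfl]
      rw [h1]
      have h2 : ∑ k ∈ Finset.range i, cB i k = 0 := by
        apply Finset.sum_eq_zero
        intro k hk
        simp only [Finset.mem_range] at hk
        unfold cB
        rw [if_neg (by omega), if_neg (by omega)]
      rw [h2]
      norm_num

lemma cB_sq (i j : ℕ) : (cB i j)^2 = if i = j then 1 else if i < j then 4 ^ (j - i - 1) else 0 := by
  unfold cB; split_ifs <;> norm_num
  rw [← pow_mul, mul_comm, pow_mul]; norm_num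

lemma sumB : ∀ n : ℕ, ∑ i ∈ Finset.range (n+1), ∑ j ∈ Finset.range (n+1),
    (cB i j)^2 ≤ 4 ^ n := by
  intro n
  induction n with
  | zero => simp [cB_sq]
  | succ n IH =>
    rw [Finset.sum_range_succ]
    have h1 : ∀ i ∈ Finset.range (n+1), ∑ j ∈ Finset.range (n+1+1), (cB i j)^2
        = (∑ j ∈ Finset.range (n+1), (cB i j)^2) + (cB i (n+1))^2 := by
      intro i _; rw [Finset.sum_range_succ]
    rw [Finset.sum_congr rfl h1, Finset.sum_add_distrib]
    have h2 : ∑ j ∈ Finset.range (n+1+1), (cB (n+1) j)^2 = 1 := by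
      rw [Finset.sum_range_succ]
      have : ∑ j ∈ Finset.range (n+1), (cB (n+1) j)^2 = 0 := by
        apply Finset.sum_eq_zero
        intro j hj; simp only [Finset.mem_range] at hj
        rw [cB_sq, if_neg (by omega), if_neg (by omega)]
      rw [this, cB_sq, if_pos rfl]; norm_num
    rw [h2]
    have h3 : ∑ i ∈ Finset.range (n+1), (cB i (n+1))^2 = ((4:ℝ)^(n+1) - 1) / 3 := by
      have he : ∀ i ∈ Finset.range (n+1), (cB i (n+1))^2 = (4:ℝ)^(n - i) := by
        intro i hi; simp only [Finset.mem_range] at hi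
        rw [cB_sq, if_neg (by omega), if_pos (by omega)]
        congr 1; omega
      rw [Finset.sum_congr rfl he]
      have := Finset.sum_range_reflect (fun k => (4:ℝ)^k) (n+1)
      simp only [Nat.add_sub_cancel] at this
      rw [this, geom_sum_eq (by norm_num)]
      norm_num
    rw [h3]
    have h4 : (1:ℝ) ≤ 4^n := one_le_pow₀ (by norm_num)
    have h5 : (4:ℝ)^(n+1) = 4 * 4^n := by rw [pow_succ]; ring
    nlinarith [IH]

lemma tri_inv_bound {n : ℕ} (T V : Matrix (Fin n) (Fin n) ℝ)
    (hVT : V * T = 1)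
    (hT : ∀ k j : Fin n, j < k → T k j = 0)
    (hTd : ∀ k j : Fin n, |T k j| ≤ |T k k|)
    (hTne : ∀ k, T k k ≠ 0) :
    ∀ (j i : Fin n), |V i j| ≤ cB i.val j.val / |T j j| := by
  suffices h : ∀ t : ℕ, ∀ j : Fin n, j.val = t → ∀ i, |V i j| ≤ cB i.val j.val / |T j j| by
    exact fun j i => h j.val j rfl i
  intro t
  induction t using Nat.strong_induction_on with
  | _ t IH =>
  intro j hjt i
  have hTj : (0:ℝ) < |T j j| := abs_pos.2 (hTne j)
  have heq : ∑ k, V i k * T k j = (if i = j then (1:ℝ) else 0) := by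
    rw [← Matrix.mul_apply, hVT, Matrix.one_apply]
  have hsplit : ∑ k, V i k * T k j = V i j * T j j + ∑ k ∈ Finset.Iio j, V i k * T k j := by
    rw [← Finset.sum_subset (Finset.subset_univ (Finset.Iic j))
      (fun k _ hk => by rw [hT k j (by simpa [Finset.mem_Iic] using hk), mul_zero]),
      ← Finset.Iio_insert, Finset.sum_insert (by simp)]
  -- bound for strictly smaller indices via IH
  have hIH : ∀ k : Fin n, k < j → |V i k| ≤ cB i.val k.val / |T k k| := by
    intro k hk
    exact IH k.val (by rw [← hjt]; exact hk) k rfl i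
  have hzero_lt : ∀ k : Fin n, k < j → k.val < i.val → V i k = 0 := by
    intro k hk hki
    have h1 := hIH k hk
    have h2 : cB i.val k.val = 0 := by unfold cB; rw [if_neg (by omega), if_neg (by omega)]
    rw [h2, zero_div] at h1
    exact abs_nonpos_iff.mp h1
  rcases lt_trichotomy i j with hij | hij | hij
  · -- i < j
    have hd : (if i = j then (1:ℝ) else 0) = 0 := if_neg (ne_of_lt hij)
    have hmain : V i j * T j j = - ∑ k ∈ Finset.Iio j, V i k * T k j := by
      rw [hsplit, hd] at heq; linarith
    have hb : |V i j * T j j| ≤ 2 ^ (j.val - i.val - 1) := by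
      rw [hmain, abs_neg]
      calc |∑ k ∈ Finset.Iio j, V i k * T k j| ≤ ∑ k ∈ Finset.Iio j, |V i k * T k j| :=
            Finset.abs_sum_le_sum_abs _ _
        _ ≤ ∑ k ∈ Finset.Iio j, cB i.val k.val := by
            apply Finset.sum_le_sum
            intro k hk
            have hkj : k < j := Finset.mem_Iio.mp hk
            have hTk : (0:ℝ) < |T k k| := abs_pos.2 (hTne k)
            rw [abs_mul]
            calc |V i k| * |T k j| ≤ (cB i.val k.val / |T k k|) * |T k k| := by
                  exact mul_le_mul (hIH k hkj) (hTd k j) (abs_nonneg _)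
                    (div_nonneg (cB_nonneg _ _) (abs_nonneg _))
              _ = cB i.val k.val := by field_simp
        _ = ∑ t ∈ Finset.range j.val, cB i.val t := fin_sum_Iio j (cB i.val)
        _ = 2 ^ (j.val - i.val - 1) := rowsum i.val j.val hij
    have hcB : cB i.val j.val = 2 ^ (j.val - i.val - 1) := by
      unfold cB; rw [if_neg (by exact fun h => absurd (Fin.val_injective h) (ne_of_lt hij)), if_pos (Fin.lt_def.mp hij)]
    rw [hcB, le_div_iff₀ hTj]
    rw [abs_mul] at hb
    exact hb
  · -- i = j
    subst hij
    have hsum0 : ∑ k ∈ Finset.Iio i, V i k * T k i = 0 := by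
      apply Finset.sum_eq_zero
      intro k hk
      have hki : k < i := Finset.mem_Iio.mp hk
      rw [hzero_lt k hki (Fin.lt_def.mp hki), zero_mul]
    rw [hsplit, hsum0, if_pos rfl, add_zero] at heq
    have hcB : cB i.val i.val = 1 := if_pos rfl
    rw [hcB, le_div_iff₀ hTj, ← abs_mul, heq, abs_one]
  · -- j < i
    have hd : (if i = j then (1:ℝ) else 0) = 0 := if_neg (ne_of_gt hij)
    have hsum0 : ∑ k ∈ Finset.Iio j, V i k * T k j = 0 := by
      apply Finset.sum_eq_zero
      intro k hk
      have hkj : k < j := Finset.mem_Iio.mp hk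
      rw [hzero_lt k hkj (Fin.lt_def.mp (lt_trans hkj hij)), zero_mul]
    rw [hsplit, hsum0, hd, add_zero] at heq
    have hV0 : V i j = 0 := by
      rcases mul_eq_zero.mp heq with h | h
      · exact h
      · exact absurd h (hTne j)
    rw [hV0, abs_zero]
    exact div_nonneg (cB_nonneg _ _) (le_of_lt hTj)



open Finset in
lemma frob_mul {n : ℕ} (M N : Matrix (Fin n) (Fin n) ℝ) :
    ∑ i, ∑ k, ((M * N) i k)^2 ≤ (∑ i, ∑ j, (M i j)^2) * (∑ j, ∑ k, (N j k)^2) := by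
  have h1 : ∀ i k : Fin n, ((M * N) i k)^2 ≤ (∑ j, (M i j)^2) * (∑ j, (N j k)^2) := by
    intro i k
    rw [Matrix.mul_apply]
    exact Finset.sum_mul_sq_le_sq_mul_sq _ _ _
  have hcomm : (∑ j, ∑ k, (N j k)^2) = ∑ k, ∑ j, ((N j k)^2) := Finset.sum_comm
  calc ∑ i, ∑ k, ((M * N) i k)^2
      ≤ ∑ i, ∑ k, (∑ j, (M i j)^2) * (∑ j, (N j k)^2) := by
        apply Finset.sum_le_sum; intro i _
        apply Finset.sum_le_sum; intro k _
        exact h1 i k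
    _ = (∑ i, ∑ j, (M i j)^2) * ∑ j, ∑ k, (N j k)^2 := by
        rw [hcomm, Finset.sum_mul_sum]

lemma frob_vec {n : ℕ} (M : Matrix (Fin n) (Fin n) ℝ) (w : Fin n → ℝ) :
    ∑ i, ((M *ᵥ w) i)^2 ≤ (∑ i, ∑ j, (M i j)^2) * (∑ j, (w j)^2) := by
  calc ∑ i, ((M *ᵥ w) i)^2
      ≤ ∑ i, (∑ j, (M i j)^2) * (∑ j, (w j)^2) := by
        apply Finset.sum_le_sum; intro i _
        rw [Matrix.mulVec, dotProduct]
        exact Finset.sum_mul_sq_le_sq_mul_sq _ _ _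
    _ = _ := by rw [Finset.sum_mul]

lemma eig_lb {m : ℕ} (A : Matrix (Fin (m+1)) (Fin (m+1)) ℝ) (hinv : IsUnit A.det)
    (i : Fin (m+1)) :
    0 ≤ (Matrix.isHermitian_conjTranspose_mul_self A).eigenvalues i ∧
    1 ≤ (∑ a, ∑ b, ((A⁻¹) a b)^2) * (Matrix.isHermitian_conjTranspose_mul_self A).eigenvalues i := by
  set hA := Matrix.isHermitian_conjTranspose_mul_self A with hhA
  set lam := hA.eigenvalues i with hlam
  set v : Fin (m+1) → ℝ := (WithLp.equiv 2 _) (hA.eigenvectorBasis i) with hv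
  have hev : (Aᴴ * A) *ᵥ v = lam • v := hA.mulVec_eigenvectorBasis i
  have hvne : v ≠ 0 := by
    intro h
    have h0 : hA.eigenvectorBasis i ≠ 0 := hA.eigenvectorBasis.orthonormal.ne_zero i
    apply h0
    have h2 : (WithLp.equiv 2 _) (hA.eigenvectorBasis i)
        = (WithLp.equiv 2 _) (0 : EuclideanSpace ℝ (Fin (m+1))) := by
      exact h.trans (by simp)
    exact (WithLp.equiv 2 _).injective h2
  set S := ∑ j, (v j)^2 with hS
  set w := A *ᵥ v with hw
  set T := ∑ j, (w j)^2 with hT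
  have hST : lam * S = T := by
    have h1 : v ⬝ᵥ ((Aᴴ * A) *ᵥ v) = lam * S := by
      rw [hev, dotProduct_smul, hS, dotProduct]
      simp only [smul_eq_mul, pow_two, Finset.mul_sum]
    have h2 : v ⬝ᵥ ((Aᴴ * A) *ᵥ v) = T := by
      rw [← Matrix.mulVec_mulVec, dotProduct_mulVec]
      have h3 : v ᵥ* Aᴴ = A *ᵥ v := by
        rw [show Aᴴ = Aᵀ from rfl, Matrix.vecMul_transpose]
      rw [h3, hT, hw, dotProduct]
      simp only [pow_two]
    rw [← h1, h2]
  have hSpos : 0 < S := by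
    obtain ⟨j, hj⟩ : ∃ j, v j ≠ 0 := by
      by_contra h
      push_neg at h
      exact hvne (funext h)
    have h1 : (0:ℝ) < (v j)^2 := by positivity
    have h2 : (v j)^2 ≤ S := Finset.single_le_sum (fun k _ => sq_nonneg (v k)) (Finset.mem_univ j)
    linarith
  have hveq : v = A⁻¹ *ᵥ w := by
    rw [hw, Matrix.mulVec_mulVec, Matrix.nonsing_inv_mul A hinv, Matrix.one_mulVec]
  have hCS : S ≤ (∑ a, ∑ b, ((A⁻¹) a b)^2) * T := by
    rw [hS, hveq]
    exact frob_vec _ _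
  have hTnonneg : 0 ≤ T := Finset.sum_nonneg fun j _ => sq_nonneg _
  constructor
  · nlinarith
  · have hν : 0 ≤ ∑ a, ∑ b, ((A⁻¹) a b)^2 :=
      Finset.sum_nonneg fun a _ => Finset.sum_nonneg fun b _ => sq_nonneg _
    nlinarith


/-- The singular values of a real matrix: square roots of the eigenvalues of `AᴴA`. -/
noncomputable def svals {n m : ℕ} (A : Matrix (Fin n) (Fin m) ℝ) : Fin m → ℝ :=
  fun i => Real.sqrt ((Matrix.isHermitian_conjTranspose_mul_self A).eigenvalues i)

/-- `sigma A k` is the `k`-th largest singular value of `A` (1-indexed). -/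
noncomputable def sigma {n : ℕ} (A : Matrix (Fin n) (Fin n) ℝ) (k : ℕ) : ℝ :=
  (Multiset.sort (Multiset.map (svals A) Finset.univ.val) (· ≤ ·)).getD (n - k) 0

-- Fin double sum of cB squares
lemma finsumB (m : ℕ) : ∑ i : Fin (m+1), ∑ j : Fin (m+1), (cB i.val j.val)^2 ≤ 4 ^ m := by
  have h : ∀ i : Fin (m+1), ∑ j : Fin (m+1), (cB i.val j.val)^2
      = ∑ j ∈ Finset.range (m+1), (cB i.val j)^2 :=
    fun i => Fin.sum_univ_eq_sum_range (fun t => (cB i.val t)^2) (m+1)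
  rw [Finset.sum_congr rfl (fun i _ => h i),
    Fin.sum_univ_eq_sum_range (fun t => ∑ j ∈ Finset.range (m+1), (cB t j)^2) (m+1)]
  exact sumB m


/-- For an invertible `(m+1) × (m+1)` matrix with LU factorization `A = L₁₁U₁₁`
produced by complete pivoting (so in `L₁₁` each diagonal entry, the pivot,
dominates its column, and `U₁₁` is unit upper triangular with entries bounded
by 1), the smallest pivot satisfies
`min{|p₁|,…,|p_{m+1}|} ≤ 4^m · σ_{m+1}(A)`. -/
theorem min_pivot_le_smallest_singularValue {m : ℕ}
    (A L U : Matrix (Fin (m + 1)) (Fin (m + 1)) ℝ)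
    (hinv : IsUnit A.det)
    (hLU : A = L * U)
    (hLtri : ∀ i j : Fin (m + 1), i < j → L i j = 0)
    (hLcol : ∀ i j : Fin (m + 1), j ≤ i → |L i j| ≤ |L j j|)
    (hUtri : ∀ i j : Fin (m + 1), j < i → U i j = 0)
    (hUdiag : ∀ i : Fin (m + 1), U i i = 1)
    (hUrow : ∀ i j : Fin (m + 1), |U i j| ≤ 1) :
    (⨅ j : Fin (m + 1), |L j j|) ≤ 4 ^ m * sigma A (m + 1) := by
  -- determinants
  have hdetU : U.det = 1 := by
    rw [Matrix.det_of_upperTriangular (fun i j h => hUtri i j h)]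
    simp [hUdiag]
  have hdetL : L.det = A.det := by
    rw [hLU, Matrix.det_mul, hdetU, mul_one]
  have hLunit : IsUnit L.det := hdetL ▸ hinv
  have hUunit : IsUnit U.det := by rw [hdetU]; exact isUnit_one
  have hLprod : L.det = ∏ i, L i i :=
    Matrix.det_of_lowerTriangular L (fun i j h => hLtri i j h)
  have hLdne : ∀ j : Fin (m+1), L j j ≠ 0 := by
    intro j hj
    have : L.det = 0 := by
      rw [hLprod]
      exact Finset.prod_eq_zero (Finset.mem_univ j) hj
    exact (hLunit.ne_zero) this
  -- the infimum
  set minp := ⨅ j : Fin (m+1), |L j j| with hminp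
  have hbdd : BddBelow (Set.range fun j : Fin (m+1) => |L j j|) :=
    Set.Finite.bddBelow (Set.finite_range _)
  have hmin_le : ∀ j, minp ≤ |L j j| := fun j => ciInf_le hbdd j
  obtain ⟨j₀, hj₀⟩ := Finite.exists_min (fun j : Fin (m+1) => |L j j|)
  have hminpos : 0 < minp := by
    have h1 : |L j₀ j₀| ≤ minp := le_ciInf hj₀
    have h2 : 0 < |L j₀ j₀| := abs_pos.2 (hLdne j₀)
    linarith
  -- bound on U⁻¹
  have hUinv := tri_inv_bound U U⁻¹ (Matrix.nonsing_inv_mul U hUunit) hUtri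
    (fun k j => by rw [hUdiag k]; simpa using hUrow k j)
    (fun k => by rw [hUdiag k]; exact one_ne_zero)
  have hνU : ∑ i, ∑ j, ((U⁻¹) i j)^2 ≤ 4 ^ m := by
    refine le_trans (le_trans (Finset.sum_le_sum fun i _ => Finset.sum_le_sum fun j _ => ?_)
      (le_refl (∑ i : Fin (m+1), ∑ j : Fin (m+1), (cB i.val j.val)^2))) (finsumB m)
    have h := hUinv j i
    rw [hUdiag j, abs_one, div_one] at h
    calc ((U⁻¹) i j)^2 = |(U⁻¹) i j|^2 := (sq_abs _).symm
      _ ≤ (cB i.val j.val)^2 := pow_le_pow_left₀ (abs_nonneg _) h 2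
  -- bound on L⁻¹
  have hLWinv : (L⁻¹)ᵀ * Lᵀ = 1 := by
    rw [← Matrix.transpose_mul, Matrix.mul_nonsing_inv L hLunit, Matrix.transpose_one]
  have hLinv := tri_inv_bound Lᵀ (L⁻¹)ᵀ hLWinv
    (fun k j h => hLtri j k h)
    (fun k j => by
      rcases le_or_gt k j with h | h
      · exact hLcol j k h
      · rw [Matrix.transpose_apply, hLtri j k h, abs_zero]; exact abs_nonneg _)
    (fun k => hLdne k)
  have hνL : ∑ a, ∑ b, ((L⁻¹) a b)^2 ≤ 4 ^ m / minp^2 := by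
    have hswap : ∑ a, ∑ b, ((L⁻¹) a b)^2 = ∑ i, ∑ j, (((L⁻¹)ᵀ) i j)^2 := by
      rw [Finset.sum_comm]
      simp [Matrix.transpose_apply]
    rw [hswap]
    have hstep : ∀ i j : Fin (m+1), (((L⁻¹)ᵀ) i j)^2 ≤ (cB i.val j.val)^2 / minp^2 := by
      intro i j
      have h := hLinv j i
      have h2 : |((L⁻¹)ᵀ) i j| ≤ cB i.val j.val / minp := by
        refine le_trans h ?_
        rw [Matrix.transpose_apply]
        exact div_le_div_of_nonneg_left (cB_nonneg _ _) hminpos (hmin_le j)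
      calc (((L⁻¹)ᵀ) i j)^2 = |((L⁻¹)ᵀ) i j|^2 := (sq_abs _).symm
        _ ≤ (cB i.val j.val / minp)^2 := pow_le_pow_left₀ (abs_nonneg _) h2 2
        _ = (cB i.val j.val)^2 / minp^2 := div_pow _ _ 2
    calc ∑ i, ∑ j, (((L⁻¹)ᵀ) i j)^2
        ≤ ∑ i : Fin (m+1), ∑ j : Fin (m+1), (cB i.val j.val)^2 / minp^2 :=
          Finset.sum_le_sum fun i _ => Finset.sum_le_sum fun j _ => hstep i j
      _ = (∑ i : Fin (m+1), ∑ j : Fin (m+1), (cB i.val j.val)^2) / minp^2 := by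
          rw [Finset.sum_div]
          exact Finset.sum_congr rfl fun i _ => (Finset.sum_div _ _ _).symm
      _ ≤ 4 ^ m / minp^2 :=
          div_le_div_of_nonneg_right (finsumB m) (by positivity)
  -- combine into bound on A⁻¹
  have hAinv : A⁻¹ = U⁻¹ * L⁻¹ := by rw [hLU, Matrix.mul_inv_rev]
  have hνA : ∑ a, ∑ b, ((A⁻¹) a b)^2 ≤ 4 ^ m * (4 ^ m / minp^2) := by
    rw [hAinv]
    refine le_trans (frob_mul _ _) ?_
    have hνUnonneg : (0:ℝ) ≤ ∑ i, ∑ j, ((U⁻¹) i j)^2 :=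
      Finset.sum_nonneg fun i _ => Finset.sum_nonneg fun j _ => sq_nonneg _
    have hνLnonneg : (0:ℝ) ≤ ∑ a, ∑ b, ((L⁻¹) a b)^2 :=
      Finset.sum_nonneg fun i _ => Finset.sum_nonneg fun j _ => sq_nonneg _
    have h4 : (0:ℝ) ≤ 4^m := by positivity
    exact mul_le_mul hνU hνL hνLnonneg h4
  -- for every eigenvalue index, minp ≤ 4^m * svals A i
  have hkey : ∀ i : Fin (m+1), minp ≤ 4 ^ m * svals A i := by
    intro i
    obtain ⟨hlam0, hlam1⟩ := eig_lb A hinv i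
    set lam := (Matrix.isHermitian_conjTranspose_mul_self A).eigenvalues i with hlamdef
    have hsq : minp^2 ≤ (4:ℝ)^m * 4^m * lam := by
      have hν : minp^2 * (∑ a, ∑ b, ((A⁻¹) a b)^2) ≤ 4^m * 4^m := by
        have := mul_le_mul_of_nonneg_left hνA (le_of_lt (by positivity : (0:ℝ) < minp^2))
        calc minp^2 * (∑ a, ∑ b, ((A⁻¹) a b)^2) ≤ minp^2 * (4 ^ m * (4 ^ m / minp^2)) := this
          _ = 4^m * 4^m := by field_simp
      nlinarith [hlam1, hlam0, sq_nonneg minp]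
    have h1 : minp = Real.sqrt (minp^2) := (Real.sqrt_sq hminpos.le).symm
    have h2 : Real.sqrt ((4:ℝ)^m * 4^m * lam) = 4^m * Real.sqrt lam := by
      rw [Real.sqrt_mul (by positivity), Real.sqrt_mul_self (by positivity : (0:ℝ) ≤ 4^m)]
    calc minp = Real.sqrt (minp^2) := h1
      _ ≤ Real.sqrt ((4:ℝ)^m * 4^m * lam) := Real.sqrt_le_sqrt hsq
      _ = 4^m * Real.sqrt lam := h2
      _ = 4^m * svals A i := rfl
  -- identify sigma with some svals value
  have hsig : ∃ i : Fin (m+1), sigma A (m+1) = svals A i := by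
    unfold sigma
    set l := Multiset.sort (Multiset.map (svals A) Finset.univ.val) (· ≤ ·) with hl
    have hlen : l.length = m + 1 := by
      rw [hl, Multiset.length_sort, Multiset.card_map]
      simp
    have hne : l ≠ [] := by
      intro h
      rw [h] at hlen
      simp at hlen
    obtain ⟨a, t, hat⟩ := List.exists_cons_of_ne_nil hne
    have hmem : a ∈ l := by rw [hat]; exact List.mem_cons_self
    have hmem2 : a ∈ Multiset.map (svals A) Finset.univ.val := (Multiset.mem_sort _).mp hmem
    obtain ⟨i, _, hi⟩ := Multiset.mem_map.mp hmem2
    refine ⟨i, ?_⟩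
    rw [hat]
    simp [hi]
  obtain ⟨i, hi⟩ := hsig
  rw [hi]
  exact hkey i
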